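/- Let S = SL(n, q) be the group of n×n matrices of determinant 1 over a finite field with q elements, n ≥ 2, and let A, B ∈ S. Then either (i) at least one of A, B is a scalar matrix and A^S · B^S = (AB)^S, or (ii) A^S · B^S is a union of at least ⌈q/2⌉ distinct conjugacy classes of S. -/

import Mathlib

open Pointwise

namespace Stmt14Aux

open Matrix

variable {F : Type*} [Field F] {n : ℕ}

lemma H1 (v w : Fin n → F) (M : Matrix (Fin n) (Fin n) F) :
    vecMulVec v w * M = vecMulVec v (w ᵥ* M) := by
  ext i j
  simp [mul_apply, vecMulVec_apply, vecMul, dotProduct, Finset.mul_sum, mul_assoc]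

lemma H3 (v w : Fin n → F) : trace (vecMulVec v w) = w ⬝ᵥ v := by
  simp [trace, diag, vecMulVec_apply, dotProduct, mul_comm]

lemma H7 (v w : Fin n → F) (M : Matrix (Fin n) (Fin n) F) :
    trace (vecMulVec v w * M) = w ⬝ᵥ (M *ᵥ v) := by
  rw [H1, H3, dotProduct_mulVec]

lemma H5 (v w w' y : Fin n → F) :
    vecMulVec v w * vecMulVec y w' = (w ⬝ᵥ y) • vecMulVec v w' := by
  ext i j
  simp [mul_apply, vecMulVec_apply, dotProduct, Finset.mul_sum, Finset.sum_mul]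
  ring_nf
  apply Finset.sum_congr rfl; intros; ring

lemma H2 (v w : Fin n → F) (M : Matrix (Fin n) (Fin n) F) :
    M * vecMulVec v w = vecMulVec (M *ᵥ v) w := by
  ext i j
  simp [mul_apply, vecMulVec_apply, mulVec, dotProduct, Finset.sum_mul, mul_assoc]

lemma H4 (v w x : Fin n → F) : vecMulVec v w *ᵥ x = (w ⬝ᵥ x) • v := by
  ext i
  simp [mulVec, vecMulVec_apply, dotProduct, Finset.mul_sum, Finset.sum_mul]
  ring_nf

lemma H6 (t : F) (v w : Fin n → F) : vecMulVec (t • v) w = t • vecMulVec v w := by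
  ext i j; simp [vecMulVec_apply, mul_assoc]

lemma Hdet (d w : Fin n → F) : det (1 + vecMulVec d w) = 1 + w ⬝ᵥ d := by
  rw [vecMulVec_eq Unit, det_one_add_replicateCol_mul_replicateRow]

lemma L1 {x y : Fin n → F} (h : ∀ c : F, y ≠ c • x) :
    ∃ w : Fin n → F, w ⬝ᵥ x = 0 ∧ w ⬝ᵥ y = 1 := by
  classical
  by_cases hx : x = 0
  · have hy : y ≠ 0 := by simpa [hx] using h 0
    obtain ⟨i, hi⟩ := Function.ne_iff.mp hy
    simp only [Pi.zero_apply] at hi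
    refine ⟨(y i)⁻¹ • (Pi.single i 1 : Fin n → F), ?_, ?_⟩
    · simp [hx]
    · simp [smul_dotProduct, single_dotProduct, inv_mul_cancel₀ hi]
  · obtain ⟨i, hi⟩ := Function.ne_iff.mp hx
    simp only [Pi.zero_apply] at hi
    set y' : Fin n → F := y - (y i / x i) • x with hy'
    have hy0 : y' ≠ 0 := by
      intro h0
      exact h (y i / x i) (by rw [← sub_eq_zero]; exact h0)
    obtain ⟨j, hj⟩ := Function.ne_iff.mp hy0
    simp only [Pi.zero_apply] at hj
    have hyj : y' j = y j - y i / x i * x j := by simp [hy']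
    refine ⟨(y' j)⁻¹ • ((Pi.single j 1 : Fin n → F) - (x j / x i) • (Pi.single i 1 : Fin n → F)),
      ?_, ?_⟩
    · rw [smul_dotProduct, sub_dotProduct, smul_dotProduct, single_dotProduct,
        single_dotProduct]
      simp [div_mul_cancel₀ _ hi]
    · rw [smul_dotProduct, sub_dotProduct, smul_dotProduct, single_dotProduct,
        single_dotProduct, one_mul, one_mul]
      have h2 : y j - x j / x i * y i = y' j := by rw [hyj]; field_simp
      simp only [smul_eq_mul]
      rw [h2, inv_mul_cancel₀ hj]

lemma NS {M : Matrix (Fin n) (Fin n) F} (hn : 2 ≤ n)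
    (h : ¬ ∃ c : F, M = c • (1 : Matrix (Fin n) (Fin n) F)) :
    ∃ u : Fin n → F, ∀ c : F, M *ᵥ u ≠ c • u := by
  classical
  by_contra hc
  push_neg at hc
  apply h
  have key : ∀ u : Fin n → F, ∃ c : F, M *ᵥ u = c • u := by
    intro u; obtain ⟨c, hc'⟩ := hc u; exact ⟨c, hc'⟩
  choose ev hev using key
  have i0 : Fin n := ⟨0, by omega⟩
  set d : Fin n → F := fun i => ev (Pi.single i 1) with hd
  have hcol : ∀ i j : Fin n, M j i = if j = i then d i else 0 := by
    intro i j
    have := congrFun (hev (Pi.single i 1)) j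
    rw [mulVec_single] at this
    simp only [MulOpposite.op_one, one_smul, col_apply] at this
    rw [this]
    simp [Pi.single_apply, hd]
  have hdeq : ∀ i : Fin n, d i = d i0 := by
    intro i
    by_cases hi : i = i0
    · rw [hi]
    · set u : Fin n → F := Pi.single i0 1 + Pi.single i 1 with hu
      have h1 := congrFun (hev u) i0
      have h2 := congrFun (hev u) i
      have hui0 : u i0 = 1 := by simp [hu, Pi.single_apply, hi]
      have hui : u i = 1 := by simp [hu, Pi.single_apply, hi]
      have hMu : M *ᵥ u = fun j => (if j = i0 then d i0 else 0) + (if j = i then d i else 0) := by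
        funext j
        rw [hu, mulVec_add]
        simp only [Pi.add_apply, mulVec_single, MulOpposite.op_one, one_smul, col_apply]
        rw [hcol i0 j, hcol i j]
      rw [hMu] at h1 h2
      have hne : i0 ≠ i := fun hh => hi hh.symm
      simp [hne, hi, hui0, hui] at h1 h2
      rw [h1, h2]
  refine ⟨d i0, ?_⟩
  ext j i
  rw [hcol i j, hdeq i]
  simp [Matrix.one_apply]

lemma SLstep {u v : Fin n → F} (h : ∀ c : F, u ≠ c • (v - u)) :
    ∃ g : Matrix.SpecialLinearGroup (Fin n) F, (g : Matrix (Fin n) (Fin n) F) *ᵥ u = v := by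
  obtain ⟨w, hw0, hw1⟩ := L1 h
  refine ⟨⟨1 + vecMulVec (v - u) w, by rw [Hdet, hw0, add_zero]⟩, ?_⟩
  show (1 + vecMulVec (v - u) w) *ᵥ u = v
  rw [add_mulVec, one_mulVec, H4, hw1, one_smul]
  abel

lemma SLtrans (hn : 2 ≤ n) {u v : Fin n → F} (hu : u ≠ 0) (hv : v ≠ 0) :
    ∃ g : Matrix.SpecialLinearGroup (Fin n) F, (g : Matrix (Fin n) (Fin n) F) *ᵥ u = v := by
  classical
  by_cases hdep : ∃ c : F, v = c • u
  · obtain ⟨c, hc⟩ := hdep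
    have hc0 : c ≠ 0 := by rintro rfl; simp at hc; exact hv hc
    obtain ⟨i, hi⟩ := Function.ne_iff.mp hu
    simp only [Pi.zero_apply] at hi
    have : Nontrivial (Fin n) := Fin.nontrivial_iff_two_le.mpr hn
    obtain ⟨j, hji⟩ := exists_ne i
    set z : Fin n → F := Pi.single j 1 with hz
    have hzi : z i = 0 := by simp [hz, Pi.single_apply, hji]
    have hzj : z j = 1 := by simp [hz]
    obtain ⟨g1, hg1⟩ := SLstep (u := u) (v := z) (by
      intro c' hc'
      have h1 := congrFun hc' i
      have h2 := congrFun hc' j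
      simp only [Pi.smul_apply, Pi.sub_apply, hzi, hzj, smul_eq_mul] at h1 h2
      have key : (1 + c') * u i = 0 := by linear_combination h1
      rcases mul_eq_zero.mp key with h | h
      · exact one_ne_zero (by linear_combination h2 + (1 - u j) * h : (1 : F) = 0)
      · exact hi h)
    obtain ⟨g2, hg2⟩ := SLstep (u := z) (v := v) (by
      intro c' hc'
      have h1 := congrFun hc' i
      have h2 := congrFun hc' j
      simp only [Pi.smul_apply, Pi.sub_apply, hzi, hzj, hc, smul_eq_mul] at h1 h2
      have hc'0 : c' ≠ 0 := by
        rintro rfl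
        exact one_ne_zero (by linear_combination h2 : (1 : F) = 0)
      have key : c' * (c * u i) = 0 := by linear_combination -h1
      rcases mul_eq_zero.mp key with h | h
      · exact hc'0 h
      · rcases mul_eq_zero.mp h with h' | h'
        · exact hc0 h'
        · exact hi h')
    exact ⟨g2 * g1, by
      rw [Matrix.SpecialLinearGroup.coe_mul, ← mulVec_mulVec, hg1, hg2]⟩
  · apply SLstep
    intro c hc
    by_cases hc0 : c = 0
    · rw [hc0, zero_smul] at hc; exact hu hc
    · apply hdep
      refine ⟨c⁻¹ * (1 + c), ?_⟩
      funext k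
      have hk := congrFun hc k
      simp only [Pi.smul_apply, Pi.sub_apply, smul_eq_mul] at hk ⊢
      field_simp
      linear_combination -hk

lemma traceFormula (Abar Bbar : Matrix (Fin n) (Fin n) F) (v w : Fin n → F) (t : F) :
    trace ((1 + t • vecMulVec v w) * Abar * (1 - t • vecMulVec v w) * Bbar)
      = trace (Abar * Bbar)
        + t * (w ⬝ᵥ ((Abar * Bbar) *ᵥ v) - w ⬝ᵥ ((Bbar * Abar) *ᵥ v))
        - t ^ 2 * ((w ⬝ᵥ (Abar *ᵥ v)) * (w ⬝ᵥ (Bbar *ᵥ v))) := by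
  set E := vecMulVec v w with hE
  have expand : (1 + t • E) * Abar * (1 - t • E) * Bbar
      = Abar * Bbar + t • (E * (Abar * Bbar)) - t • (Abar * (E * Bbar))
        - (t * t) • (E * Abar * E * Bbar) := by
    simp only [add_mul, sub_mul, mul_sub, mul_add, one_mul, mul_one, smul_mul_assoc,
      mul_smul_comm, smul_smul, smul_add, smul_sub]
    noncomm_ring
  rw [expand]
  rw [trace_sub, trace_sub, trace_add, trace_smul, trace_smul, trace_smul]
  have e1 : trace (E * (Abar * Bbar)) = w ⬝ᵥ ((Abar * Bbar) *ᵥ v) := by rw [hE, H7]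
  have e2 : trace (Abar * (E * Bbar)) = w ⬝ᵥ ((Bbar * Abar) *ᵥ v) := by
    rw [← mul_assoc, trace_mul_cycle, trace_mul_comm, hE, H7]
  have e3 : trace (E * Abar * E * Bbar)
      = (w ⬝ᵥ (Abar *ᵥ v)) * (w ⬝ᵥ (Bbar *ᵥ v)) := by
    have : E * Abar * E = (w ⬝ᵥ (Abar *ᵥ v)) • E := by
      rw [hE, H1, H5, ← dotProduct_mulVec]
    rw [this, smul_mul_assoc, trace_smul, hE, H7]
    simp
  rw [e1, e2, e3]
  simp only [smul_eq_mul]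
  ring

lemma quadImage [Fintype F] [DecidableEq F] (c0 c1 c2 : F) (hc2 : c2 ≠ 0) :
    (Fintype.card F + 1) / 2
      ≤ (Finset.univ.image (fun t : F => c0 + t * c1 - t ^ 2 * c2)).card := by
  classical
  set τ : F → F := fun t => c0 + t * c1 - t ^ 2 * c2 with hτ
  have hfib : ∀ y ∈ Finset.univ.image τ,
      (Finset.univ.filter (fun t => τ t = y)).card ≤ 2 := by
    intro y hy
    obtain ⟨t0, -, ht0⟩ := Finset.mem_image.mp hy
    have hsub : Finset.univ.filter (fun t => τ t = y) ⊆ {t0, c1 / c2 - t0} := by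
      intro t ht
      have htt : τ t = τ t0 := by
        rw [ht0]; exact (Finset.mem_filter.mp ht).2
      simp only [hτ] at htt
      have key : (t - t0) * (c1 - c2 * (t + t0)) = 0 := by linear_combination htt
      rcases mul_eq_zero.mp key with h | h
      · simp [sub_eq_zero.mp h]
      · have : t = c1 / c2 - t0 := by field_simp; linear_combination -h
        simp [this]
    calc (Finset.univ.filter (fun t => τ t = y)).card
        ≤ ({t0, c1 / c2 - t0} : Finset F).card := Finset.card_le_card hsub
      _ ≤ 2 := (Finset.card_insert_le _ _).trans (by simp)
  have := Finset.card_le_mul_card_image (f := τ) Finset.univ 2 hfib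
  rw [Finset.card_univ] at this
  omega

/-- trace, as a function on conjugacy classes of `SL_n(F)`. -/
noncomputable def trC : ConjClasses (Matrix.SpecialLinearGroup (Fin n) F) → F :=
  Quotient.lift (fun g : Matrix.SpecialLinearGroup (Fin n) F =>
      trace (g : Matrix (Fin n) (Fin n) F))
    (by
      intro a b hab
      obtain ⟨c, hc⟩ := isConj_iff.mp (hab : IsConj a b)
      have hinv : ((c⁻¹ : Matrix.SpecialLinearGroup (Fin n) F) : Matrix (Fin n) (Fin n) F)
          * (c : Matrix (Fin n) (Fin n) F) = 1 := by
        rw [← Matrix.SpecialLinearGroup.coe_mul, inv_mul_cancel,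
          Matrix.SpecialLinearGroup.coe_one]
      rw [← hc]
      show trace ((a : Matrix (Fin n) (Fin n) F))
          = trace ((c * a * c⁻¹ : Matrix.SpecialLinearGroup (Fin n) F) : Matrix (Fin n) (Fin n) F)
      rw [Matrix.SpecialLinearGroup.coe_mul, Matrix.SpecialLinearGroup.coe_mul,
        trace_mul_comm, ← mul_assoc, hinv, one_mul])

lemma trC_mk (g : Matrix.SpecialLinearGroup (Fin n) F) :
    trC (ConjClasses.mk g) = trace (g : Matrix (Fin n) (Fin n) F) := rfl

lemma central_of_scalar {A : Matrix.SpecialLinearGroup (Fin n) F}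
    (hA : ∃ lam : F, (A : Matrix (Fin n) (Fin n) F) = lam • (1 : Matrix (Fin n) (Fin n) F)) :
    ∀ g : Matrix.SpecialLinearGroup (Fin n) F, g * A = A * g := by
  obtain ⟨lam, h⟩ := hA
  intro g
  apply Subtype.ext
  rw [Matrix.SpecialLinearGroup.coe_mul, Matrix.SpecialLinearGroup.coe_mul, h]
  simp [smul_mul_assoc, mul_smul_comm]

lemma prod_eq_of_central {A B : Matrix.SpecialLinearGroup (Fin n) F}
    (hcen : ∀ g : Matrix.SpecialLinearGroup (Fin n) F, g * A = A * g) :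
    {X | IsConj A X} * {X | IsConj B X} = {X | IsConj (A * B) X} := by
  have hclass : ∀ X, IsConj A X → X = A := by
    intro X hX
    obtain ⟨c, hc⟩ := isConj_iff.mp hX
    rw [← hc, hcen c, mul_assoc, mul_inv_cancel, mul_one]
  ext x
  simp only [Set.mem_mul, Set.mem_setOf_eq]
  constructor
  · rintro ⟨p, hp, q, hq, rfl⟩
    obtain ⟨c, hc⟩ := isConj_iff.mp hq
    rw [hclass p hp, ← hc]
    apply isConj_iff.mpr ⟨c, ?_⟩
    rw [← mul_assoc c A B, hcen c, mul_assoc A c B, mul_assoc A (c * B) c⁻¹]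
  · intro hx
    obtain ⟨c, hc⟩ := isConj_iff.mp hx
    refine ⟨A, IsConj.refl A, c * B * c⁻¹, isConj_iff.mpr ⟨c, rfl⟩, ?_⟩
    rw [← hc, ← mul_assoc c A B, hcen c, mul_assoc A c B, mul_assoc A (c * B) c⁻¹]

lemma prod_eq_of_central' {A B : Matrix.SpecialLinearGroup (Fin n) F}
    (hcen : ∀ g : Matrix.SpecialLinearGroup (Fin n) F, g * B = B * g) :
    {X | IsConj A X} * {X | IsConj B X} = {X | IsConj (A * B) X} := by
  have hclass : ∀ X, IsConj B X → X = B := by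
    intro X hX
    obtain ⟨c, hc⟩ := isConj_iff.mp hX
    rw [← hc, hcen c, mul_assoc, mul_inv_cancel, mul_one]
  have key : ∀ c : Matrix.SpecialLinearGroup (Fin n) F,
      c * (A * B) * c⁻¹ = (c * A * c⁻¹) * B := by
    intro c
    have := hcen c⁻¹
    calc c * (A * B) * c⁻¹ = c * A * (B * c⁻¹) := by group
      _ = c * A * (c⁻¹ * B) := by rw [← this]
      _ = (c * A * c⁻¹) * B := by rw [← mul_assoc]
  ext x
  simp only [Set.mem_mul, Set.mem_setOf_eq]
  constructor
  · rintro ⟨p, hp, q, hq, rfl⟩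
    obtain ⟨c, hc⟩ := isConj_iff.mp hp
    rw [hclass q hq, ← hc]
    exact isConj_iff.mpr ⟨c, key c⟩
  · intro hx
    obtain ⟨c, hc⟩ := isConj_iff.mp hx
    exact ⟨c * A * c⁻¹, isConj_iff.mpr ⟨c, rfl⟩, B, IsConj.refl B, by rw [← hc, key c]⟩

end Stmt14Aux

open Stmt14Aux Matrix

theorem stmt_14 (F : Type*) [Field F] [Fintype F] (n : ℕ) (hn : 2 ≤ n)
    (A B : Matrix.SpecialLinearGroup (Fin n) F) :
    (((∃ lam : F, (A : Matrix (Fin n) (Fin n) F) = lam • (1 : Matrix (Fin n) (Fin n) F)) ∨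
        (∃ lam : F, (B : Matrix (Fin n) (Fin n) F) = lam • (1 : Matrix (Fin n) (Fin n) F))) ∧
      {X | IsConj A X} * {X | IsConj B X} = {X | IsConj (A * B) X}) ∨
    (Fintype.card F + 1) / 2 ≤ Set.ncard
      (ConjClasses.mk '' ({X | IsConj A X} * {X | IsConj B X})) := by
  classical
  by_cases hA : ∃ lam : F, (A : Matrix (Fin n) (Fin n) F) = lam • (1 : Matrix (Fin n) (Fin n) F)
  · exact Or.inl ⟨Or.inl hA, prod_eq_of_central (central_of_scalar hA)⟩
  by_cases hB : ∃ lam : F, (B : Matrix (Fin n) (Fin n) F) = lam • (1 : Matrix (Fin n) (Fin n) F)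
  · exact Or.inl ⟨Or.inr hB, prod_eq_of_central' (central_of_scalar hB)⟩
  right
  -- B has a non-eigenvector v
  obtain ⟨v, hv⟩ := NS (M := (B : Matrix (Fin n) (Fin n) F)) hn hB
  have hv0 : v ≠ 0 := by
    rintro rfl
    exact hv 0 (by simp)
  -- A has a non-eigenvector u
  obtain ⟨u, hu⟩ := NS (M := (A : Matrix (Fin n) (Fin n) F)) hn hA
  have hu0 : u ≠ 0 := by
    rintro rfl
    exact hu 0 (by simp)
  -- move u to v by an element of SL
  obtain ⟨g, hg⟩ := SLtrans hn hu0 hv0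
  set A' : Matrix.SpecialLinearGroup (Fin n) F := g * A * g⁻¹ with hA'
  have hginv : ((g⁻¹ : Matrix.SpecialLinearGroup (Fin n) F) : Matrix (Fin n) (Fin n) F) * (g : Matrix (Fin n) (Fin n) F) = 1 := by
    rw [← Matrix.SpecialLinearGroup.coe_mul, inv_mul_cancel, Matrix.SpecialLinearGroup.coe_one]
  have hA'v : (A' : Matrix (Fin n) (Fin n) F) *ᵥ v
      = (g : Matrix (Fin n) (Fin n) F) *ᵥ ((A : Matrix (Fin n) (Fin n) F) *ᵥ u) := by
    have e : ((g⁻¹ : Matrix.SpecialLinearGroup (Fin n) F) : Matrix (Fin n) (Fin n) F) *ᵥ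
        ((g : Matrix (Fin n) (Fin n) F) *ᵥ u) = u := by
      rw [mulVec_mulVec, hginv, one_mulVec]
    rw [hA', Matrix.SpecialLinearGroup.coe_mul, Matrix.SpecialLinearGroup.coe_mul, ← hg,
      ← mulVec_mulVec, ← mulVec_mulVec, e]
  have ha' : ∀ c : F, (A' : Matrix (Fin n) (Fin n) F) *ᵥ v ≠ c • v := by
    intro c hc
    apply hu c
    have : (g : Matrix (Fin n) (Fin n) F) *ᵥ ((A : Matrix (Fin n) (Fin n) F) *ᵥ u)
        = (g : Matrix (Fin n) (Fin n) F) *ᵥ (c • u) := by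
      rw [← hA'v, hc, ← hg, mulVec_smul]
    have hinj := congrArg
      (fun x => ((g⁻¹ : Matrix.SpecialLinearGroup (Fin n) F) : Matrix (Fin n) (Fin n) F) *ᵥ x) this
    simp only [mulVec_mulVec, ← mul_assoc] at hinj
    rw [hginv] at hinj
    simpa using hinj
  set Abar : Matrix (Fin n) (Fin n) F := (A' : Matrix (Fin n) (Fin n) F) with hAbar
  set Bbar : Matrix (Fin n) (Fin n) F := (B : Matrix (Fin n) (Fin n) F) with hBbar
  set a : Fin n → F := Abar *ᵥ v with haa
  set b : Fin n → F := Bbar *ᵥ v with hbb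
  -- a linear functional w with w ⬝ᵥ v = 0, w ⬝ᵥ a ≠ 0, w ⬝ᵥ b ≠ 0
  obtain ⟨wa, hwa0, hwa1⟩ := L1 (x := v) (y := a) ha'
  obtain ⟨wb, hwb0, hwb1⟩ := L1 (x := v) (y := b) hv
  obtain ⟨w, hw0, hwa, hwb⟩ : ∃ w : Fin n → F, w ⬝ᵥ v = 0 ∧ w ⬝ᵥ a ≠ 0 ∧ w ⬝ᵥ b ≠ 0 := by
    by_cases h1 : wa ⬝ᵥ b ≠ 0
    · exact ⟨wa, hwa0, by rw [hwa1]; exact one_ne_zero, h1⟩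
    by_cases h2 : wb ⬝ᵥ a ≠ 0
    · exact ⟨wb, hwb0, h2, by rw [hwb1]; exact one_ne_zero⟩
    push_neg at h1 h2
    refine ⟨wa + wb, ?_, ?_, ?_⟩
    · rw [add_dotProduct, hwa0, hwb0, add_zero]
    · rw [add_dotProduct, hwa1, h2, add_zero]; exact one_ne_zero
    · rw [add_dotProduct, hwb1, h1, zero_add]; exact one_ne_zero
  -- the transvection family
  set E : Matrix (Fin n) (Fin n) F := vecMulVec v w with hEdef
  have hdetT : ∀ t : F, det (1 + t • E) = 1 := by
    intro t
    rw [hEdef, ← H6, Hdet, dotProduct_smul, hw0, smul_zero, add_zero]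
  set T : F → Matrix.SpecialLinearGroup (Fin n) F := fun t => ⟨1 + t • E, hdetT t⟩ with hT
  have hTinv : ∀ t : F, (T t)⁻¹ = ⟨1 + (-t) • E, hdetT (-t)⟩ := by
    intro t
    apply inv_eq_of_mul_eq_one_right
    apply Subtype.ext
    show (1 + t • E) * (1 + (-t) • E) = (1 : Matrix (Fin n) (Fin n) F)
    have hEE : E * E = 0 := by
      rw [hEdef, H5, hw0, zero_smul]
    simp only [mul_add, add_mul, one_mul, mul_one, smul_mul_assoc, mul_smul_comm, smul_smul,
      hEE, smul_zero]
    module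
  -- the family of elements of the product of the two classes
  set X : F → Matrix.SpecialLinearGroup (Fin n) F := fun t => T t * A' * (T t)⁻¹ * B with hX
  have hXmem : ∀ t : F, X t ∈ {X | IsConj A X} * {X | IsConj B X} := by
    intro t
    have h1 : IsConj A (T t * A' * (T t)⁻¹) := by
      apply isConj_iff.mpr ⟨T t * g, ?_⟩
      rw [hA']
      group
    exact Set.mul_mem_mul h1 (IsConj.refl B)
  -- the trace of X t
  set c0 : F := trace (Abar * Bbar) with hc0
  set c1 : F := w ⬝ᵥ ((Abar * Bbar) *ᵥ v) - w ⬝ᵥ ((Bbar * Abar) *ᵥ v) with hc1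
  set c2 : F := (w ⬝ᵥ a) * (w ⬝ᵥ b) with hc2
  have hc2ne : c2 ≠ 0 := mul_ne_zero hwa hwb
  set τ : F → F := fun t => c0 + t * c1 - t ^ 2 * c2 with hτ
  have htrace : ∀ t : F, trace ((X t : Matrix (Fin n) (Fin n) F)) = τ t := by
    intro t
    rw [hX]
    show trace (((T t * A' * (T t)⁻¹ * B : Matrix.SpecialLinearGroup (Fin n) F) : Matrix (Fin n) (Fin n) F)) = τ t
    rw [hTinv t]
    show trace ((1 + t • E) * Abar * (1 + (-t) • E) * Bbar) = τ t
    have : (1 : Matrix (Fin n) (Fin n) F) + (-t) • E = 1 - t • E := by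
      rw [neg_smul, sub_eq_add_neg]
    rw [this, hEdef, traceFormula]
  -- counting distinct conjugacy classes via distinct traces
  set ψ : F → ConjClasses (Matrix.SpecialLinearGroup (Fin n) F) := fun t => ConjClasses.mk (X t) with hψ
  have hτtrC : ∀ t : F, τ t = trC (ψ t) := by
    intro t
    rw [hψ]
    show τ t = trC (ConjClasses.mk (X t))
    rw [trC_mk, htrace t]
  have himg : Finset.image τ Finset.univ
      = Finset.image trC (Finset.image ψ Finset.univ) := by
    rw [Finset.image_image]
    exact Finset.image_congr (fun t _ => hτtrC t)
  have hcard1 : (Fintype.card F + 1) / 2 ≤ (Finset.image τ Finset.univ).card := quadImage c0 c1 c2 hc2ne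
  have hcard2 : (Finset.image τ Finset.univ).card ≤ (Finset.image ψ Finset.univ).card := by
    rw [himg]
    exact Finset.card_image_le
  have hsub : (↑(Finset.image ψ Finset.univ) : Set (ConjClasses (Matrix.SpecialLinearGroup (Fin n) F)))
      ⊆ ConjClasses.mk '' ({X | IsConj A X} * {X | IsConj B X}) := by
    intro cl hcl
    obtain ⟨t, -, ht⟩ := Finset.mem_image.mp hcl
    exact ⟨X t, hXmem t, ht⟩
  have hfin : (ConjClasses.mk '' ({X | IsConj A X} * {X | IsConj B X})).Finite :=
    Set.toFinite _
  calc (Fintype.card F + 1) / 2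
      ≤ (Finset.image τ Finset.univ).card := hcard1
    _ ≤ (Finset.image ψ Finset.univ).card := hcard2
    _ = (↑(Finset.image ψ Finset.univ) : Set (ConjClasses (Matrix.SpecialLinearGroup (Fin n) F))).ncard :=
        (Set.ncard_coe_finset _).symm
    _ ≤ Set.ncard (ConjClasses.mk '' ({X | IsConj A X} * {X | IsConj B X})) :=
        Set.ncard_le_ncard hsub hfin
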